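/- Under the measure P_{α,r} on words over {0,...,r-1} (length Poisson(αr), letters i.i.d. uniform), for j ≤ r the expected number of subsets A of size j of the index set that are complete in W equals α^j. -/

import Mathlib

open Finset

/-- The probability of each fixed word of length `n` over `{0,...,r-1}` under the
measure where the length is `Poisson(αr)` and letters are i.i.d. uniform. -/
noncomputable def wordProb (α : ℝ) (r n : ℕ) : ℝ :=
  (Real.exp (-(α * r)) * (α * r) ^ n / Nat.factorial n) * (1 / r) ^ n

/-- A set of indices `A = {a_1 < ... < a_j}` (given by a strictly monotone map
`Fin j → Fin n`) is complete in the word `w` iff `w_{a_i} ≤ min (j - i) (r - 1)`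
for all `1 ≤ i ≤ j` (zero-indexed below). -/
def completeCount (r n j : ℕ) (w : Fin n → Fin r) : ℕ :=
  (Finset.univ.filter (fun A : Fin j → Fin n =>
    StrictMono A ∧ ∀ i : Fin j, (w (A i) : ℕ) ≤ min (j - (i : ℕ) - 1) (r - 1))).card

lemma card_le_filter {r k : ℕ} (hk : k < r) :
    (Finset.univ.filter fun x : Fin r => (x : ℕ) ≤ k).card = k + 1 := by
  have h : (Finset.univ.filter fun x : Fin r => (x : ℕ) ≤ k) = Finset.Iic ⟨k, hk⟩ := by
    ext x; simp [Fin.le_def]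
  rw [h, Fin.card_Iic]

lemma count_words {n j r : ℕ} (hr : 0 < r) (A : Fin j → Fin n) (hA : Function.Injective A)
    (c : Fin j → ℕ) (hc : ∀ i, c i + 1 ≤ r) :
    (Finset.univ.filter (fun w : Fin n → Fin r => ∀ i, (w (A i) : ℕ) ≤ c i)).card
      = (∏ i, (c i + 1)) * r ^ (n - j) := by
  classical
  set S : Fin n → Finset (Fin r) :=
    fun p => Finset.univ.filter (fun x : Fin r => ∀ i, A i = p → (x : ℕ) ≤ c i) with hS
  have hfilter : (Finset.univ.filter (fun w : Fin n → Fin r => ∀ i, (w (A i) : ℕ) ≤ c i))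
      = Fintype.piFinset S := by
    ext w
    simp only [mem_filter, mem_univ, true_and, Fintype.mem_piFinset, hS]
    constructor
    · rintro h p i rfl; exact h i
    · intro h i; exact h (A i) i rfl
  rw [hfilter, Fintype.card_piFinset]
  have himg : (Finset.univ.image A).card = j := by
    rw [Finset.card_image_of_injective _ hA, Finset.card_univ, Fintype.card_fin]
  rw [← Finset.prod_mul_prod_compl (Finset.univ.image A)]
  congr 1
  · rw [Finset.prod_image (fun a _ b _ h => hA h)]
    apply Finset.prod_congr rfl
    intro i _
    have : S (A i) = Finset.univ.filter (fun x : Fin r => (x : ℕ) ≤ c i) := by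
      ext x
      simp only [hS, mem_filter, mem_univ, true_and]
      constructor
      · intro h; exact h i rfl
      · intro h i' hi'; rwa [hA hi']
    rw [this, card_le_filter (hc i)]
  · have : ∀ p ∈ (Finset.univ.image A)ᶜ, (S p).card = r := by
      intro p hp
      have hnp : ∀ i, A i ≠ p := by
        intro i hip
        simp only [Finset.mem_compl, Finset.mem_image] at hp
        exact hp ⟨i, Finset.mem_univ i, hip⟩
      have : S p = Finset.univ := by
        ext x; simp only [hS, mem_filter, mem_univ, true_and, iff_true]
        intro i hi; exact absurd hi (hnp i)
      rw [this, Finset.card_univ, Fintype.card_fin]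
    rw [Finset.prod_congr rfl this, Finset.prod_const, Finset.card_compl, himg]
    simp

lemma card_strictMono_filter (n j : ℕ) :
    (Finset.univ.filter fun A : Fin j → Fin n => StrictMono A).card = n.choose j := by
  classical
  have : (Finset.univ.filter fun A : Fin j → Fin n => StrictMono A).card
      = (Finset.powersetCard j (Finset.univ : Finset (Fin n))).card := by
    apply Finset.card_bij' (fun A _ => Finset.univ.image A)
      (fun s hs => s.orderEmbOfFin (by
        rw [Finset.mem_powersetCard] at hs; exact hs.2))
    · intro A hA
      rw [Finset.mem_filter] at hA
      exact (Finset.orderEmbOfFin_unique _ (fun x => Finset.mem_image_of_mem _ (Finset.mem_univ x))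
        hA.2).symm
    · intro s hs
      apply Finset.coe_injective
      rw [Finset.coe_image, Finset.coe_univ, Set.image_univ]
      exact Finset.range_orderEmbOfFin _ _
    · intro A hA
      rw [Finset.mem_filter] at hA
      rw [Finset.mem_powersetCard]
      exact ⟨Finset.subset_univ _, by
        rw [Finset.card_image_of_injective _ hA.2.injective, Finset.card_univ, Fintype.card_fin]⟩
    · intro s hs
      rw [Finset.mem_filter]
      exact ⟨Finset.mem_univ _, (s.orderEmbOfFin _).strictMono⟩
  rw [this, Finset.card_powersetCard, Finset.card_univ, Fintype.card_fin]

lemma prod_min_eq_factorial {r j : ℕ} (hjr : j ≤ r) (hr : 0 < r) :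
    ∏ i : Fin j, (min (j - (i : ℕ) - 1) (r - 1) + 1) = Nat.factorial j := by
  have h1 : ∀ i : Fin j, min (j - (i : ℕ) - 1) (r - 1) + 1 = j - (i : ℕ) := by
    intro i
    have hi : (i : ℕ) < j := i.2
    have : j - (i : ℕ) - 1 ≤ r - 1 := by omega
    rw [min_eq_left this]
    omega
  rw [Finset.prod_congr rfl (fun i _ => h1 i), Fin.prod_univ_eq_prod_range (fun i => j - i)]
  calc ∏ i ∈ Finset.range j, (j - i)
      = ∏ i ∈ Finset.range j, (j - 1 - i + 1) := by
        apply Finset.prod_congr rfl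
        intro i hi
        rw [Finset.mem_range] at hi
        omega
    _ = ∏ i ∈ Finset.range j, (i + 1) := Finset.prod_range_reflect (fun i => i + 1) j
    _ = Nat.factorial j := Finset.prod_range_add_one_eq_factorial j

lemma sum_completeCount {r j : ℕ} (hjr : j ≤ r) (hr : 0 < r) (n : ℕ) :
    ∑ w : Fin n → Fin r, completeCount r n j w
      = n.choose j * (Nat.factorial j * r ^ (n - j)) := by
  classical
  have key : ∀ w : Fin n → Fin r, completeCount r n j w
      = ∑ A ∈ Finset.univ.filter (fun A : Fin j → Fin n => StrictMono A),
          (if ∀ i : Fin j, (w (A i) : ℕ) ≤ min (j - (i : ℕ) - 1) (r - 1) then 1 else 0) := by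
    intro w
    rw [completeCount, ← Finset.filter_filter, Finset.card_filter]
  rw [Finset.sum_congr rfl (fun w _ => key w), Finset.sum_comm]
  have inner : ∀ A ∈ Finset.univ.filter (fun A : Fin j → Fin n => StrictMono A),
      (∑ w : Fin n → Fin r,
        (if ∀ i : Fin j, (w (A i) : ℕ) ≤ min (j - (i : ℕ) - 1) (r - 1) then 1 else 0))
      = Nat.factorial j * r ^ (n - j) := by
    intro A hA
    rw [Finset.mem_filter] at hA
    rw [← Finset.card_filter]
    rw [count_words hr A hA.2.injective _ (fun i => by
      have := min_le_right (j - (i : ℕ) - 1) (r - 1); omega)]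
    rw [prod_min_eq_factorial hjr hr]
  rw [Finset.sum_congr rfl inner, Finset.sum_const, card_strictMono_filter, smul_eq_mul]

lemma exp_tsum (x : ℝ) : ∑' n : ℕ, x ^ n / (Nat.factorial n : ℝ) = Real.exp x := by
  rw [Real.exp_eq_exp_ℝ, NormedSpace.exp_eq_tsum_div]

lemma choose_fact_key (m j : ℕ) :
    (((m + j).choose j : ℝ)) * (Nat.factorial j : ℝ) * (Nat.factorial m : ℝ)
      = ((Nat.factorial (m + j)) : ℝ) := by
  have h := Nat.choose_mul_factorial_mul_factorial (Nat.le_add_left j m)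
  rw [Nat.add_sub_cancel] at h
  exact_mod_cast h

theorem expected_complete_sets (α : ℝ) (hα : 0 < α) (r j : ℕ) (hjr : j ≤ r)
    (hr : 0 < r) :
    ∑' n : ℕ, ∑ w : Fin n → Fin r, wordProb α r n * (completeCount r n j w : ℝ)
      = α ^ j := by
  set F : ℕ → ℝ := fun n => ∑ w : Fin n → Fin r, wordProb α r n * (completeCount r n j w : ℝ)
    with hF
  have hrR : (0 : ℝ) < (r : ℝ) := by exact_mod_cast hr
  have hf : ∀ n, F n = wordProb α r n * ((n.choose j * (Nat.factorial j * r ^ (n - j)) : ℕ) : ℝ) := by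
    intro n
    rw [hF]
    simp only
    rw [← Finset.mul_sum, ← Nat.cast_sum, sum_completeCount hjr hr]
  have hinj : Function.Injective (fun m : ℕ => m + j) := add_left_injective j
  have hsupp : Function.support F ⊆ Set.range (fun m : ℕ => m + j) := by
    intro n hn
    rcases le_or_gt j n with h | h
    · exact ⟨n - j, show n - j + j = n by omega⟩
    · exfalso
      apply hn
      rw [hf n, Nat.choose_eq_zero_of_lt h]
      simp
  rw [show (∑' n : ℕ, ∑ w : Fin n → Fin r, wordProb α r n * (completeCount r n j w : ℝ))
      = ∑' n, F n from rfl, ← hinj.tsum_eq hsupp]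
  have hterm : ∀ m : ℕ, F (m + j)
      = (Real.exp (-(α * r)) * α ^ j) * ((α * r) ^ m / (Nat.factorial m : ℝ)) := by
    intro m
    rw [hf]
    rw [wordProb]
    have hfm : ((Nat.factorial m : ℝ)) ≠ 0 := by exact_mod_cast m.factorial_ne_zero
    have hfj : ((Nat.factorial j : ℝ)) ≠ 0 := by exact_mod_cast j.factorial_ne_zero
    have hfmj : ((Nat.factorial (m + j) : ℝ)) ≠ 0 := by exact_mod_cast (m + j).factorial_ne_zero
    have hC : (((m + j).choose j : ℝ)) = ((Nat.factorial (m + j)) : ℝ)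
        / ((Nat.factorial j : ℝ) * (Nat.factorial m : ℝ)) := by
      rw [eq_div_iff (by positivity)]
      rw [← choose_fact_key m j]
      ring
    rw [Nat.add_sub_cancel]
    push_cast
    rw [hC]
    field_simp
    have hr0 : (r : ℝ) ≠ 0 := ne_of_gt hrR
    rw [← mul_pow, mul_assoc α, mul_one_div_cancel hr0, mul_one, pow_add]
    ring
  rw [tsum_congr hterm, tsum_mul_left, exp_tsum, Real.exp_neg]
  field_simp [Real.exp_ne_zero]
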